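/- arXiv:1901.03076 — 2 statements merged into one kernel-verified Lean document; each statement's English description precedes it below -/
import Mathlib

section
/- Let v : I → S² ⊂ ℝ³ be a differentiable curve on an interval I, and let u = g ∘ v where g(y₁,y₂,y₃) = ((√2/2)y₁², (√2/2)y₂², (√2/2)y₃², y₁y₂, y₂y₃, y₃y₁). Then ‖u'(t)‖ = ‖v'(t)‖ for every t ∈ I; i.e., g is an isometric immersion along curves on the sphere. -/
noncomputable abbrev E3 := EuclideanSpace ℝ (Fin 3)
noncomputable abbrev E6 := EuclideanSpace ℝ (Fin 6)

/-- The quadratic (Veronese-type) map `g : ℝ³ → ℝ⁶`. -/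
noncomputable def gmap (y : E3) : E6 :=
  WithLp.toLp 2 ![Real.sqrt 2 / 2 * (y 0) ^ 2, Real.sqrt 2 / 2 * (y 1) ^ 2, Real.sqrt 2 / 2 * (y 2) ^ 2,
    y 0 * y 1, y 1 * y 2, y 2 * y 0]

/-- if `v : I → S² ⊂ ℝ³` is a differentiable curve on an interval `I` and
`u = g ∘ v`, then `‖u'(t)‖ = ‖v'(t)‖` for every `t ∈ I`: `g` is an isometric immersion
along curves on the sphere. -/
theorem stmt_6 (a b : ℝ) (hab : a < b) (v v' : ℝ → E3) (u' : ℝ → E6)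
    (hsph : ∀ t ∈ Set.Icc a b, ‖v t‖ = 1)
    (hv : ∀ t ∈ Set.Icc a b, HasDerivWithinAt v (v' t) (Set.Icc a b) t)
    (hu : ∀ t ∈ Set.Icc a b, HasDerivWithinAt (gmap ∘ v) (u' t) (Set.Icc a b) t) :
    ∀ t ∈ Set.Icc a b, ‖u' t‖ = ‖v' t‖ := by
  intro t ht
  have hud : UniqueDiffWithinAt ℝ (Set.Icc a b) t := uniqueDiffOn_Icc hab t ht
  -- component derivatives of v
  have hvc : ∀ i : Fin 3, HasDerivWithinAt (fun s => v s i) (v' t i) (Set.Icc a b) t :=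
    fun i => (EuclideanSpace.proj i : E3 →L[ℝ] ℝ).hasFDerivAt.comp_hasDerivWithinAt t (hv t ht)
  -- component derivatives of u
  have huc : ∀ i : Fin 6, HasDerivWithinAt (fun s => gmap (v s) i) (u' t i) (Set.Icc a b) t :=
    fun i => (EuclideanSpace.proj i : E6 →L[ℝ] ℝ).hasFDerivAt.comp_hasDerivWithinAt t (hu t ht)
  -- the sphere condition in coordinates
  have hnorm : ∀ s ∈ Set.Icc a b, (v s 0)^2 + (v s 1)^2 + (v s 2)^2 = 1 := by
    intro s hs
    have h1 := hsph s hs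
    have h2 : ‖v s‖^2 = (1:ℝ)^2 := by rw [h1]
    rw [EuclideanSpace.norm_eq] at h2
    rw [Real.sq_sqrt (by positivity)] at h2
    simpa [Fin.sum_univ_three, sq_abs, one_pow] using h2
  -- derivative of the squared norm gives orthogonality
  have hdot : v t 0 * v' t 0 + v t 1 * v' t 1 + v t 2 * v' t 2 = 0 := by
    have hD : HasDerivWithinAt (fun s => (v s 0)^2 + (v s 1)^2 + (v s 2)^2)
        ((2 * v t 0 ^ 1 * v' t 0 + 2 * v t 1 ^ 1 * v' t 1) + 2 * v t 2 ^ 1 * v' t 2)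
        (Set.Icc a b) t :=
      (((hvc 0).pow 2).add ((hvc 1).pow 2)).add ((hvc 2).pow 2)
    have hC : HasDerivWithinAt (fun s => (v s 0)^2 + (v s 1)^2 + (v s 2)^2) 0
        (Set.Icc a b) t := by
      have : HasDerivWithinAt (fun _ : ℝ => (1:ℝ)) 0 (Set.Icc a b) t :=
        hasDerivWithinAt_const t _ 1
      exact this.congr (fun s hs => (hnorm s hs)) (hnorm t ht)
    have heq : (2 * v t 0 ^ 1 * v' t 0 + 2 * v t 1 ^ 1 * v' t 1) + 2 * v t 2 ^ 1 * v' t 2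
        = (0:ℝ) := by
      rw [← hD.derivWithin hud, ← hC.derivWithin hud]
    simp only [pow_one] at heq
    linarith
  -- compute the components of u'
  have hcomp : ∀ i : Fin 6, ∀ d : ℝ,
      HasDerivWithinAt (fun s => gmap (v s) i) d (Set.Icc a b) t → u' t i = d := by
    intro i d hd
    rw [← (huc i).derivWithin hud, hd.derivWithin hud]
  have e0 : u' t 0 = Real.sqrt 2 / 2 * (2 * v t 0 * v' t 0) := by
    apply hcomp
    have h : HasDerivWithinAt (fun s => Real.sqrt 2 / 2 * (v s 0)^2)
        (Real.sqrt 2 / 2 * (2 * v t 0 ^ 1 * v' t 0)) (Set.Icc a b) t :=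
      ((hvc 0).pow 2).const_mul _
    simp only [pow_one] at h
    exact h.congr (fun s _ => by simp only [gmap]; rfl) (by simp only [gmap]; rfl)
  have e1 : u' t 1 = Real.sqrt 2 / 2 * (2 * v t 1 * v' t 1) := by
    apply hcomp
    have h : HasDerivWithinAt (fun s => Real.sqrt 2 / 2 * (v s 1)^2)
        (Real.sqrt 2 / 2 * (2 * v t 1 ^ 1 * v' t 1)) (Set.Icc a b) t :=
      ((hvc 1).pow 2).const_mul _
    simp only [pow_one] at h
    exact h.congr (fun s _ => by simp only [gmap]; rfl) (by simp only [gmap]; rfl)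
  have e2 : u' t 2 = Real.sqrt 2 / 2 * (2 * v t 2 * v' t 2) := by
    apply hcomp
    have h : HasDerivWithinAt (fun s => Real.sqrt 2 / 2 * (v s 2)^2)
        (Real.sqrt 2 / 2 * (2 * v t 2 ^ 1 * v' t 2)) (Set.Icc a b) t :=
      ((hvc 2).pow 2).const_mul _
    simp only [pow_one] at h
    exact h.congr (fun s _ => by simp only [gmap]; rfl) (by simp only [gmap]; rfl)
  have e3 : u' t 3 = v' t 0 * v t 1 + v t 0 * v' t 1 := by
    apply hcomp
    have h : HasDerivWithinAt (fun s => v s 0 * v s 1)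
        (v' t 0 * v t 1 + v t 0 * v' t 1) (Set.Icc a b) t := (hvc 0).mul (hvc 1)
    exact h.congr (fun s _ => by simp only [gmap]; rfl) (by simp only [gmap]; rfl)
  have e4 : u' t 4 = v' t 1 * v t 2 + v t 1 * v' t 2 := by
    apply hcomp
    have h : HasDerivWithinAt (fun s => v s 1 * v s 2)
        (v' t 1 * v t 2 + v t 1 * v' t 2) (Set.Icc a b) t := (hvc 1).mul (hvc 2)
    exact h.congr (fun s _ => by simp only [gmap]; rfl) (by simp only [gmap]; rfl)
  have e5 : u' t 5 = v' t 2 * v t 0 + v t 2 * v' t 0 := by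
    apply hcomp
    have h : HasDerivWithinAt (fun s => v s 2 * v s 0)
        (v' t 2 * v t 0 + v t 2 * v' t 0) (Set.Icc a b) t := (hvc 2).mul (hvc 0)
    exact h.congr (fun s _ => by simp only [gmap]; rfl) (by simp only [gmap]; rfl)
  -- now compare the squared norms
  have hy1 := hnorm t ht
  have h2 : Real.sqrt 2 ^ 2 = 2 := Real.sq_sqrt (by norm_num)
  have hsq : ‖u' t‖^2 = ‖v' t‖^2 := by
    rw [EuclideanSpace.norm_eq, EuclideanSpace.norm_eq,
      Real.sq_sqrt (by positivity), Real.sq_sqrt (by positivity)]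
    simp only [Fin.sum_univ_six, Fin.sum_univ_three, Real.norm_eq_abs, sq_abs]
    rw [e0, e1, e2, e3, e4, e5]
    linear_combination
      ((v t 0)^2 * (v' t 0)^2 + (v t 1)^2 * (v' t 1)^2 + (v t 2)^2 * (v' t 2)^2) * h2
      + ((v' t 0)^2 + (v' t 1)^2 + (v' t 2)^2) * hy1
      + (v t 0 * v' t 0 + v t 1 * v' t 1 + v t 2 * v' t 2) * hdot
  have h1 : (0:ℝ) ≤ ‖u' t‖ := norm_nonneg _
  have h3 : (0:ℝ) ≤ ‖v' t‖ := norm_nonneg _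
  nlinarith [hsq, h1, h3]
end

section
/- For the curve c : [−1,1] → ℝ³ with ċ(s) = (1/√2)(1, s², √(1−s⁴)), the total curvature ∫₋₁¹ k(s) ds and the total absolute torsion ∫₋₁¹ |τ(s)| ds are both equal to π/√2, where k(s) = √2|s|/√(1−s⁴) and |τ(s)| = √2|s|/√(1−s⁴). -/
open Real

namespace Stmt14Aux

open MeasureTheory intervalIntegral

noncomputable def g (s : ℝ) : ℝ := Real.sqrt 2 * |s| / Real.sqrt (1 - s ^ 4)
noncomputable def F (s : ℝ) : ℝ := Real.sqrt 2 / 2 * Real.arcsin (s ^ 2)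

lemma hF : ∀ x ∈ Set.Ioo (0:ℝ) 1, HasDerivAt F (g x) x := by
  intro x hx
  obtain ⟨h0, h1⟩ := hx
  have hne1 : x ^ 2 ≠ 1 := by nlinarith
  have hnem1 : x ^ 2 ≠ -1 := by nlinarith
  have hsq : HasDerivAt (fun y : ℝ => y ^ 2) (2 * x) x := by
    simpa using hasDerivAt_pow 2 x
  have h : HasDerivAt (Real.arcsin ∘ fun y : ℝ => y ^ 2)
      (1 / Real.sqrt (1 - (x ^ 2) ^ 2) * (2 * x)) x :=
    HasDerivAt.comp x (Real.hasDerivAt_arcsin hnem1 hne1) hsq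
  have h2 := h.const_mul (Real.sqrt 2 / 2)
  refine HasDerivAt.congr_deriv h2 ?_
  have he : (x ^ 2) ^ 2 = x ^ 4 := by ring
  rw [g, abs_of_pos h0, he]
  ring

lemma gcont : Continuous F :=
  continuous_const.mul (Real.continuous_arcsin.comp (continuous_pow 2))

lemma gnonneg : ∀ x ∈ Set.Ioo (0:ℝ) 1, 0 ≤ g x := fun x _ => by
  unfold g; positivity

lemma gint : IntervalIntegrable g volume 0 1 := by
  apply intervalIntegral.intervalIntegrable_deriv_of_nonneg gcont.continuousOn
  · simpa using hF
  · simpa using gnonneg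

lemma key1 : (∫ s in (0:ℝ)..1, g s) = Real.sqrt 2 / 2 * (π / 2) := by
  have := intervalIntegral.integral_eq_sub_of_hasDeriv_right_of_le zero_le_one
    gcont.continuousOn (fun x hx => (hF x hx).hasDerivWithinAt) gint
  rw [this]
  simp [F, Real.arcsin_one]

lemma geven : ∀ x : ℝ, g (-x) = g x := fun x => by
  have : (-x) ^ 4 = x ^ 4 := by ring
  simp [g, this]

lemma key2 : (∫ s in (-1:ℝ)..0, g s) = ∫ s in (0:ℝ)..1, g s := by
  have := intervalIntegral.integral_comp_neg (a := (0:ℝ)) (b := 1) g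
  simp only [geven] at this
  simpa using this.symm

lemma gint2 : IntervalIntegrable g volume (-1) 0 := by
  have := ((IntervalIntegrable.iff_comp_neg (by simp)).mp gint)
  simp only [geven] at this
  simpa using this.symm

lemma key : (∫ s in (-1:ℝ)..1, g s) = π / Real.sqrt 2 := by
  rw [← intervalIntegral.integral_add_adjacent_intervals gint2 gint, key2, key1]
  have h2 : (0:ℝ) < Real.sqrt 2 := by positivity
  have hm : Real.sqrt 2 * Real.sqrt 2 = 2 := Real.mul_self_sqrt (by norm_num)
  field_simp
  linear_combination 2 * hm

end Stmt14Aux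

/-- for the curve `c` with `ċ(s) = (1/√2)(1, s², √(1−s⁴))`, the total
curvature `∫₋₁¹ k(s) ds` and the total absolute torsion `∫₋₁¹ |τ(s)| ds` both equal `π/√2`,
where `k(s) = √2|s|/√(1−s⁴)` and `|τ(s)| = √2|s|/√(1−s⁴)`. -/
theorem stmt_14 (k τ : ℝ → ℝ)
    (hk : ∀ s, k s = Real.sqrt 2 * |s| / Real.sqrt (1 - s ^ 4))
    (hτ : ∀ s, |τ s| = Real.sqrt 2 * |s| / Real.sqrt (1 - s ^ 4)) :
    (∫ s in (-1 : ℝ)..1, k s) = π / Real.sqrt 2 ∧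
    (∫ s in (-1 : ℝ)..1, |τ s|) = π / Real.sqrt 2 := by
  constructor
  · simp only [hk]
    exact Stmt14Aux.key
  · simp only [hτ]
    exact Stmt14Aux.key
end
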